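/- arXiv:2501.00970 — 5 statements merged into one kernel-verified Lean document; each statement's English description precedes it below -/
import Mathlib

section
/- Let θ₁ = (σ₁, α₁, ρ₁) and θ₂ = (σ₂, α₂, ρ₂) be parameter vectors with σ₁, σ₂ > 0, α₁, α₂ positive integers, and ρ₁, ρ₂ ∈ [0, 1). If F_W(w; σ₁, α₁, ρ₁) = F_W(w; σ₂, α₂, ρ₂) for every w ∈ (0, 1), then σ₁ = σ₂, α₁ = α₂ and ρ₁ = ρ₂ (identifiability of the unit-Fréchet family on the restricted parameter space). -/
/-- The unit-Fréchet CDF: `F_W(w; σ, α, ρ)` for `0 < w < 1`, where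
`s = w/(1-w)` and `t = s^α/σ^α`. -/
noncomputable def unitFrechetCDF (σ α ρ w : ℝ) : ℝ :=
  let s : ℝ := w / (1 - w)
  let t : ℝ := s ^ α / σ ^ α
  (t / (t + 1)) * (((t + 1) ^ 2 - ρ) / ((t + 1) ^ 2 - ρ * t))

open Filter Topology Set

noncomputable def gfun (ρ t : ℝ) : ℝ :=
  ((t+1)^2 - ρ) / ((t+1) * ((t+1)^2 - ρ*t))

lemma gfun_tendsto (ρ : ℝ) : Tendsto (gfun ρ) (𝓝 0) (𝓝 (1 - ρ)) := by
  have h : ContinuousAt (gfun ρ) 0 := by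
    apply ContinuousAt.div
    · fun_prop
    · fun_prop
    · norm_num
  have h2 := h.tendsto
  have : gfun ρ 0 = 1 - ρ := by simp [gfun]
  rwa [this] at h2

lemma cdf_eq (σ ρ : ℝ) (α : ℕ) (s : ℝ) (hs : 0 < s) :
    unitFrechetCDF σ (α:ℝ) ρ (s/(1+s)) = ((s/σ)^α) * gfun ρ ((s/σ)^α) := by
  have h1 : (1:ℝ) + s ≠ 0 := by positivity
  have hw : (s/(1+s)) / (1 - s/(1+s)) = s := by
    rw [div_eq_iff]
    · field_simp; ring
    · field_simp; simp [h1]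
  unfold unitFrechetCDF gfun
  simp only [hw, Real.rpow_natCast, div_pow]
  rw [div_mul_div_comm, mul_div_assoc]

lemma g_comp_zero (σ ρ : ℝ) (α : ℕ) (hα : 0 < α) :
    Tendsto (fun s => gfun ρ ((s/σ)^α)) (𝓝[>](0:ℝ)) (𝓝 (1-ρ)) := by
  have hinner : Tendsto (fun s : ℝ => (s/σ)^α) (𝓝 0) (𝓝 0) := by
    have : Tendsto (fun s : ℝ => (s/σ)^α) (𝓝 0) (𝓝 ((0/σ)^α)) :=
      ((continuous_id.div_const σ).pow α).tendsto 0
    rwa [zero_div, zero_pow hα.ne'] at this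
  exact ((gfun_tendsto ρ).comp hinner).mono_left nhdsWithin_le_nhds

lemma g_comp_top (σ ρ : ℝ) (α : ℕ) (hα : 0 < α) :
    Tendsto (fun s => gfun ρ ((σ/s)^α)) atTop (𝓝 (1-ρ)) := by
  have hinner : Tendsto (fun s : ℝ => (σ/s)^α) atTop (𝓝 0) := by
    have := ((tendsto_inv_atTop_zero (𝕜 := ℝ)).const_mul σ).pow α
    simpa [div_eq_mul_inv, zero_pow hα.ne'] using this
  exact (gfun_tendsto ρ).comp hinner

lemma pow_sub_pos_aux (ρ t : ℝ) (ht : 0 < t) (hρ1 : ρ < 1) :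
    (t+1)^2 - ρ*t > 0 := by nlinarith

lemma gfun_inv (ρ t : ℝ) (ht : 0 < t) (hρ0 : 0 ≤ ρ) (hρ1 : ρ < 1) :
    gfun ρ t⁻¹ = t * ((t+1)^2 - ρ*t^2) / ((t+1) * ((t+1)^2 - ρ*t)) := by
  have ht' : t ≠ 0 := ht.ne'
  have hti : (0:ℝ) < t⁻¹ := by positivity
  have d1 : t + 1 ≠ 0 := by positivity
  have d2 : (t+1)^2 - ρ*t ≠ 0 := (pow_sub_pos_aux ρ t ht hρ1).ne'
  have d3 : t⁻¹ + 1 ≠ 0 := by positivity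
  have d4 : (t⁻¹+1)^2 - ρ*t⁻¹ ≠ 0 := (pow_sub_pos_aux ρ t⁻¹ hti hρ1).ne'
  unfold gfun
  rw [div_eq_div_iff (by positivity) (mul_ne_zero d1 d2)]
  field_simp
  ring

lemma one_sub_eq (ρ t : ℝ) (ht : 0 < t) (hρ0 : 0 ≤ ρ) (hρ1 : ρ < 1) :
    (1 - t * gfun ρ t) * t = gfun ρ t⁻¹ := by
  have d1 : t + 1 ≠ 0 := by positivity
  have d2 : (t+1)^2 - ρ*t ≠ 0 := (pow_sub_pos_aux ρ t ht hρ1).ne'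
  rw [gfun_inv ρ t ht hρ0 hρ1]
  unfold gfun
  generalize hC : (t+1)^2 - ρ*t = C at *
  field_simp
  subst hC
  ring

lemma one_sub_cdf (σ ρ : ℝ) (α : ℕ) (hσ : 0 < σ) (hρ0 : 0 ≤ ρ) (hρ1 : ρ < 1)
    (s : ℝ) (hs : 0 < s) :
    (1 - (s/σ)^α * gfun ρ ((s/σ)^α)) * s^α = σ^α * gfun ρ ((σ/s)^α) := by
  have ht : 0 < (s/σ)^α := by positivity
  have h1 := one_sub_eq ρ _ ht hρ0 hρ1
  have hinv : (((s/σ)^α)⁻¹ : ℝ) = (σ/s)^α := by rw [← inv_pow, inv_div]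
  rw [← hinv, ← h1]
  set G := gfun ρ ((s/σ)^α)
  rw [div_pow]
  have hσα : (σ:ℝ)^α ≠ 0 := by positivity
  field_simp

lemma alpha_le (σ₁ σ₂ ρ₁ ρ₂ : ℝ) (α₁ α₂ : ℕ)
    (hσ₁ : 0 < σ₁) (hσ₂ : 0 < σ₂) (hα₁ : 0 < α₁) (hα₂ : 0 < α₂)
    (hρ₁ : ρ₁ ∈ Set.Ico (0 : ℝ) 1) (hρ₂ : ρ₂ ∈ Set.Ico (0 : ℝ) 1)
    (key : ∀ s : ℝ, 0 < s →
      (s/σ₁)^α₁ * gfun ρ₁ ((s/σ₁)^α₁) = (s/σ₂)^α₂ * gfun ρ₂ ((s/σ₂)^α₂)) :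
    α₁ ≤ α₂ := by
  by_contra hlt
  push_neg at hlt
  have hk : 0 < α₁ - α₂ := by omega
  have T2 : Tendsto (fun s : ℝ => σ₁^α₁ * gfun ρ₂ ((s/σ₂)^α₂)) (𝓝[>](0:ℝ))
      (𝓝 (σ₁^α₁ * (1-ρ₂))) := (g_comp_zero σ₂ ρ₂ α₂ hα₂).const_mul _
  have T1 : Tendsto (fun s : ℝ => s^(α₁-α₂) * σ₂^α₂ * gfun ρ₁ ((s/σ₁)^α₁))
      (𝓝[>](0:ℝ)) (𝓝 0) := by
    have hp : Tendsto (fun s : ℝ => s^(α₁-α₂) * σ₂^α₂) (𝓝[>](0:ℝ)) (𝓝 0) := by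
      have := ((continuous_pow (α₁-α₂)).tendsto (0:ℝ)).mul_const (σ₂^α₂)
      simpa [zero_pow hk.ne'] using this.mono_left nhdsWithin_le_nhds
    have := hp.mul (g_comp_zero σ₁ ρ₁ α₁ hα₁)
    simpa using this
  have heq : ∀ s ∈ Ioi (0:ℝ),
      σ₁^α₁ * gfun ρ₂ ((s/σ₂)^α₂) = s^(α₁-α₂) * σ₂^α₂ * gfun ρ₁ ((s/σ₁)^α₁) := by
    intro s hs
    have hs' : (0:ℝ) < s := hs
    have e := key s hs'
    set G1 := gfun ρ₁ ((s/σ₁)^α₁)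
    set G2 := gfun ρ₂ ((s/σ₂)^α₂)
    rw [div_pow, div_pow] at e
    have hpow : s ^ α₁ = s^(α₁-α₂) * s^α₂ := by rw [← pow_add]; congr 1; omega
    have hsne : s ^ α₂ ≠ 0 := by positivity
    have h1 : σ₁^α₁ ≠ 0 := by positivity
    have h2 : σ₂^α₂ ≠ 0 := by positivity
    rw [hpow] at e
    field_simp at e
    apply mul_left_cancel₀ hsne
    linear_combination (-s^α₂) * e
  have T2' : Tendsto (fun s : ℝ => σ₁^α₁ * gfun ρ₂ ((s/σ₂)^α₂)) (𝓝[>](0:ℝ)) (𝓝 0) :=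
    T1.congr' ((eventually_nhdsWithin_of_forall heq).mono fun s h => h.symm)
  have huniq := tendsto_nhds_unique T2 T2'
  nlinarith [pow_pos hσ₁ α₁, hρ₂.2]

/-- Identifiability of the unit-Fréchet family on the restricted parameter space
`σ > 0`, `α` a positive integer, `ρ ∈ [0, 1)`. -/
theorem unitFrechet_identifiable
    (σ₁ σ₂ ρ₁ ρ₂ : ℝ) (α₁ α₂ : ℕ)
    (hσ₁ : 0 < σ₁) (hσ₂ : 0 < σ₂)
    (hα₁ : 0 < α₁) (hα₂ : 0 < α₂)
    (hρ₁ : ρ₁ ∈ Set.Ico (0 : ℝ) 1) (hρ₂ : ρ₂ ∈ Set.Ico (0 : ℝ) 1)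
    (h : ∀ w ∈ Set.Ioo (0 : ℝ) 1,
      unitFrechetCDF σ₁ (α₁ : ℝ) ρ₁ w = unitFrechetCDF σ₂ (α₂ : ℝ) ρ₂ w) :
    σ₁ = σ₂ ∧ α₁ = α₂ ∧ ρ₁ = ρ₂ := by
  have key : ∀ s : ℝ, 0 < s →
      (s/σ₁)^α₁ * gfun ρ₁ ((s/σ₁)^α₁) = (s/σ₂)^α₂ * gfun ρ₂ ((s/σ₂)^α₂) := by
    intro s hs
    have hw : s/(1+s) ∈ Set.Ioo (0:ℝ) 1 := by
      constructor
      · positivity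
      · rw [div_lt_one (by positivity)]; linarith
    have := h _ hw
    rwa [cdf_eq σ₁ ρ₁ α₁ s hs, cdf_eq σ₂ ρ₂ α₂ s hs] at this
  have hαeq : α₁ = α₂ := by
    have h1 := alpha_le σ₁ σ₂ ρ₁ ρ₂ α₁ α₂ hσ₁ hσ₂ hα₁ hα₂ hρ₁ hρ₂ key
    have h2 := alpha_le σ₂ σ₁ ρ₂ ρ₁ α₂ α₁ hσ₂ hσ₁ hα₂ hα₁ hρ₂ hρ₁
      (fun s hs => (key s hs).symm)
    omega
  subst hαeq
  -- E1 : limits at zero give σ₂^α (1-ρ₁) = σ₁^α (1-ρ₂)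
  have E1 : σ₂^α₁*(1-ρ₁) = σ₁^α₁*(1-ρ₂) := by
    have T1 : Tendsto (fun s : ℝ => σ₂^α₁ * gfun ρ₁ ((s/σ₁)^α₁)) (𝓝[>](0:ℝ))
        (𝓝 (σ₂^α₁*(1-ρ₁))) := (g_comp_zero σ₁ ρ₁ α₁ hα₁).const_mul _
    have T2 : Tendsto (fun s : ℝ => σ₁^α₁ * gfun ρ₂ ((s/σ₂)^α₁)) (𝓝[>](0:ℝ))
        (𝓝 (σ₁^α₁*(1-ρ₂))) := (g_comp_zero σ₂ ρ₂ α₁ hα₂).const_mul _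
    have heq : ∀ s ∈ Ioi (0:ℝ),
        σ₂^α₁ * gfun ρ₁ ((s/σ₁)^α₁) = σ₁^α₁ * gfun ρ₂ ((s/σ₂)^α₁) := by
      intro s hs
      have hs' : (0:ℝ) < s := hs
      have e := key s hs'
      set G1 := gfun ρ₁ ((s/σ₁)^α₁)
      set G2 := gfun ρ₂ ((s/σ₂)^α₁)
      rw [div_pow, div_pow] at e
      have hsne : s ^ α₁ ≠ 0 := by positivity
      have h1 : σ₁^α₁ ≠ 0 := by positivity
      have h2 : σ₂^α₁ ≠ 0 := by positivity
      field_simp at e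
      apply mul_left_cancel₀ hsne
      linear_combination s^α₁ * e
    exact tendsto_nhds_unique T1
      (T2.congr' ((eventually_nhdsWithin_of_forall heq).mono fun s h => h.symm))
  -- E2 : limits at infinity give σ₁^α (1-ρ₁) = σ₂^α (1-ρ₂)
  have E2 : σ₁^α₁*(1-ρ₁) = σ₂^α₁*(1-ρ₂) := by
    have T1 : Tendsto (fun s : ℝ => σ₁^α₁ * gfun ρ₁ ((σ₁/s)^α₁)) atTop
        (𝓝 (σ₁^α₁*(1-ρ₁))) := (g_comp_top σ₁ ρ₁ α₁ hα₁).const_mul _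
    have T2 : Tendsto (fun s : ℝ => σ₂^α₁ * gfun ρ₂ ((σ₂/s)^α₁)) atTop
        (𝓝 (σ₂^α₁*(1-ρ₂))) := (g_comp_top σ₂ ρ₂ α₁ hα₂).const_mul _
    have heq : ∀ᶠ s : ℝ in atTop,
        σ₁^α₁ * gfun ρ₁ ((σ₁/s)^α₁) = σ₂^α₁ * gfun ρ₂ ((σ₂/s)^α₁) := by
      filter_upwards [eventually_gt_atTop (0:ℝ)] with s hs
      rw [← one_sub_cdf σ₁ ρ₁ α₁ hσ₁ hρ₁.1 hρ₁.2 s hs,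
          ← one_sub_cdf σ₂ ρ₂ α₁ hσ₂ hρ₂.1 hρ₂.2 s hs, key s hs]
    exact tendsto_nhds_unique T1 (T2.congr' (heq.mono fun s h => h.symm))
  -- final algebra
  have ha : (0:ℝ) < σ₁^α₁ := by positivity
  have hb : (0:ℝ) < σ₂^α₁ := by positivity
  have hr1 : (0:ℝ) < 1 - ρ₁ := by linarith [hρ₁.2]
  have hr2 : (0:ℝ) < 1 - ρ₂ := by linarith [hρ₂.2]
  have hρ : ρ₁ = ρ₂ := by nlinarith
  have hσpow : σ₁^α₁ = σ₂^α₁ := by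
    rw [hρ] at E2; nlinarith
  have hσ : σ₁ = σ₂ := (pow_left_inj₀ hσ₁.le hσ₂.le hα₁.ne').mp hσpow
  exact ⟨hσ, rfl, hρ⟩
end

section
/- If σ = 1, then for every δ with 0 < δ < 1/2, the unit-Fréchet density satisfies f_W(1/2 − δ; 1, α, ρ) = f_W(1/2 + δ; 1, α, ρ); that is, the unit-Fréchet PDF with σ = 1 is symmetric about w = 1/2. -/
/-- The unit-Fréchet PDF: `f_W(w; σ, α, ρ)` for `0 < w < 1`, where
`s = w/(1-w)` and `t = s^α/σ^α`. -/
noncomputable def unitFrechetPDF (σ α ρ w : ℝ) : ℝ :=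
  let s : ℝ := w / (1 - w)
  let t : ℝ := s ^ α / σ ^ α
  (α / σ ^ α) * s ^ (α - 1) * (s + 1) ^ 2 *
    ((2 * (t + 1) ^ 2 - ρ * (t ^ 2 + 1)) / ((t + 1) ^ 2 - ρ * t) ^ 2
      - 1 / (t + 1) ^ 2)

lemma gsymm (ρ t : ℝ) (hρ1 : ρ ≤ 1) (ht : 0 < t) :
    (2 * (t⁻¹ + 1) ^ 2 - ρ * ((t⁻¹) ^ 2 + 1)) / ((t⁻¹ + 1) ^ 2 - ρ * t⁻¹) ^ 2
      - 1 / (t⁻¹ + 1) ^ 2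
    = t ^ 2 * ((2 * (t + 1) ^ 2 - ρ * (t ^ 2 + 1)) / ((t + 1) ^ 2 - ρ * t) ^ 2
      - 1 / (t + 1) ^ 2) := by
  have h1 : (0:ℝ) < (t + 1) ^ 2 - ρ * t := by nlinarith
  have h2 : (t⁻¹ + 1) ^ 2 - ρ * t⁻¹ = ((t + 1) ^ 2 - ρ * t) / t ^ 2 := by
    field_simp; ring
  have h3 : (0:ℝ) < t⁻¹ + 1 := by positivity
  have h4 : (0:ℝ) < t + 1 := by positivity
  rw [h2]
  field_simp
  ring

/-- With `σ = 1`, the unit-Fréchet PDF is symmetric about `w = 1/2`. -/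
theorem unitFrechetPDF_symm (α ρ : ℝ) (hα : 0 < α) (hρ : ρ ∈ Set.Icc (0 : ℝ) 1) :
    ∀ δ : ℝ, 0 < δ → δ < 1 / 2 →
      unitFrechetPDF 1 α ρ (1 / 2 - δ) = unitFrechetPDF 1 α ρ (1 / 2 + δ) := by
  intro δ hδ1 hδ2
  have ha : (0:ℝ) < 1 / 2 - δ := by linarith
  have hb : (0:ℝ) < 1 / 2 + δ := by linarith
  have h1a : (1:ℝ) - (1 / 2 - δ) = 1 / 2 + δ := by ring
  have h1b : (1:ℝ) - (1 / 2 + δ) = 1 / 2 - δ := by ring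
  have hone : (1:ℝ) ^ α = 1 := Real.one_rpow α
  set s : ℝ := (1 / 2 - δ) / (1 / 2 + δ) with hs_def
  have hs : 0 < s := div_pos ha hb
  have hs2 : (1 / 2 + δ) / (1 / 2 - δ) = s⁻¹ := by
    rw [hs_def, inv_div]
  have ht : 0 < s ^ α := Real.rpow_pos_of_pos hs α
  have hsub : s ^ (α - 1) = s ^ α / s := by
    rw [Real.rpow_sub hs, Real.rpow_one]
  have hsub' : s⁻¹ ^ (α - 1) = (s ^ α / s)⁻¹ := by
    rw [Real.inv_rpow hs.le, hsub]
  simp only [unitFrechetPDF, h1a, h1b, hs2, hone, ← hs_def, div_one,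
    Real.inv_rpow hs.le, hsub, hsub']
  rw [gsymm ρ (s ^ α) hρ.2 ht]
  have hne : s ^ α ≠ 0 := ht.ne'
  have hsne : s ≠ 0 := hs.ne'
  field_simp
  ring
end

section
/- For every ρ ∈ [0,1], p ∈ (0,1) and x > 0, the equation G(x; ρ) = p holds if and only if (p−1)x³ + ((3−ρ)p − 2)x² + ((3−ρ)p + ρ − 1)x + p = 0; that is, the quantile Q_Y(p) is the unique positive root of this cubic polynomial. -/
/-- The CDF `G(x; ρ)`. -/
noncomputable def Gcdf (ρ x : ℝ) : ℝ :=
  (x / (x + 1)) * (((x + 1) ^ 2 - ρ) / ((x + 1) ^ 2 - ρ * x))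

/-- For every `ρ ∈ [0,1]`, `p ∈ (0,1)` and `x > 0`, `G(x; ρ) = p` holds iff
`(p−1)x³ + ((3−ρ)p − 2)x² + ((3−ρ)p + ρ − 1)x + p = 0`. -/
theorem Gcdf_eq_iff_cubic (ρ : ℝ) (hρ : ρ ∈ Set.Icc (0 : ℝ) 1)
    (p : ℝ) (hp : p ∈ Set.Ioo (0 : ℝ) 1) (x : ℝ) (hx : 0 < x) :
    Gcdf ρ x = p ↔
      (p - 1) * x ^ 3 + ((3 - ρ) * p - 2) * x ^ 2 + ((3 - ρ) * p + ρ - 1) * x + p = 0 := by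
  obtain ⟨hρ0, hρ1⟩ := hρ
  have h1 : x + 1 > 0 := by linarith
  have h2 : (x + 1) ^ 2 - ρ * x > 0 := by nlinarith
  unfold Gcdf
  rw [div_mul_div_comm, div_eq_iff (by positivity)]
  constructor <;> intro h
  · linear_combination -h
  · linear_combination -h
end

section
/- For every σ > 0, α > 0 and ρ ∈ [0,1], the integral of the unit-Fréchet PDF over the unit interval equals 1: ∫₀¹ f_W(w; σ, α, ρ) dw = 1. -/
open Set MeasureTheory

/-- The unit-Fréchet PDF is nonnegative on (0,1). -/
lemma unitFrechetPDF_nonneg (σ α ρ : ℝ) (hσ : 0 < σ) (hα : 0 < α)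
    (hρ0 : 0 ≤ ρ) (hρ1 : ρ ≤ 1) {w : ℝ} (hw0 : 0 < w) (hw1 : w < 1) :
    0 ≤ unitFrechetPDF σ α ρ w := by
  have h1w : (0:ℝ) < 1 - w := by linarith
  have hS : (0:ℝ) < σ ^ α := Real.rpow_pos_of_pos hσ α
  simp only [unitFrechetPDF]
  set s : ℝ := w / (1 - w) with hs
  set t : ℝ := s ^ α / σ ^ α with htdef
  have hspos : 0 < s := div_pos hw0 h1w
  have ht : 0 ≤ t := div_nonneg (Real.rpow_nonneg hspos.le α) hS.le
  have hD : 0 < (t + 1) ^ 2 - ρ * t := by nlinarith [mul_nonneg hρ0 ht]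
  have ht1 : (0:ℝ) < (t + 1) ^ 2 := by positivity
  refine mul_nonneg (mul_nonneg (mul_nonneg ?_ ?_) ?_) ?_
  · exact div_nonneg hα.le hS.le
  · exact Real.rpow_nonneg hspos.le _
  · positivity
  · rw [sub_nonneg, div_le_div_iff₀ ht1 (pow_pos hD 2), one_mul]
    have hND : (t + 1) ^ 2 - ρ * t ≤ 2 * (t + 1) ^ 2 - ρ * (t ^ 2 + 1) := by
      nlinarith [mul_nonneg (sub_nonneg.2 hρ1) (mul_nonneg ht ht), mul_nonneg hρ0 ht]
    have h2 : (t + 1) ^ 2 - ρ * t ≤ (t + 1) ^ 2 := by nlinarith [mul_nonneg hρ0 ht]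
    calc ((t + 1) ^ 2 - ρ * t) ^ 2
        = ((t + 1) ^ 2 - ρ * t) * ((t + 1) ^ 2 - ρ * t) := sq _
      _ ≤ (2 * (t + 1) ^ 2 - ρ * (t ^ 2 + 1)) * (t + 1) ^ 2 :=
          mul_le_mul hND h2 hD.le (hD.le.trans hND)

/-- The unit-Fréchet PDF integrates to 1 over the unit interval. -/
theorem unitFrechetPDF_integral_eq_one (σ α ρ : ℝ) (hσ : 0 < σ) (hα : 0 < α)
    (hρ : ρ ∈ Set.Icc (0 : ℝ) 1) :
    ∫ w in (0:ℝ)..1, unitFrechetPDF σ α ρ w = 1 := by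
  obtain ⟨hρ0, hρ1⟩ := hρ
  have hS : (0:ℝ) < σ ^ α := Real.rpow_pos_of_pos hσ α
  set F : ℝ → ℝ := fun x =>
    σ ^ α * (1 - x) ^ α / (σ ^ α * (1 - x) ^ α + x ^ α)
      - σ ^ α * (1 - x) ^ α * ((2 - ρ) * x ^ α + 2 * (σ ^ α * (1 - x) ^ α)) /
          ((σ ^ α * (1 - x) ^ α + x ^ α) ^ 2 - ρ * (σ ^ α * (1 - x) ^ α * x ^ α))
    with hF
  -- positivity of denominators on Icc
  have key : ∀ x ∈ Icc (0:ℝ) 1,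
      0 < σ ^ α * (1 - x) ^ α + x ^ α ∧
      0 < (σ ^ α * (1 - x) ^ α + x ^ α) ^ 2 - ρ * (σ ^ α * (1 - x) ^ α * x ^ α) := by
    intro x hx
    have ha : 0 ≤ σ ^ α * (1 - x) ^ α :=
      mul_nonneg hS.le (Real.rpow_nonneg (by linarith [hx.2]) α)
    have hb : 0 ≤ x ^ α := Real.rpow_nonneg hx.1 α
    have hab : 0 < σ ^ α * (1 - x) ^ α + x ^ α := by
      rcases hx.1.lt_or_eq with h | h
      · have : 0 < x ^ α := Real.rpow_pos_of_pos h α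
        linarith
      · have : 0 < σ ^ α * (1 - x) ^ α := by
          rw [← h]; simpa using hS
        linarith
    refine ⟨hab, ?_⟩
    nlinarith [mul_pos hab hab, mul_nonneg ha hb,
      mul_nonneg (mul_nonneg (sub_nonneg.2 hρ1) ha) hb,
      sq_nonneg (σ ^ α * (1 - x) ^ α - x ^ α)]
  -- continuity
  have hBc : Continuous fun x : ℝ => x ^ α :=
    continuous_iff_continuousAt.2 fun x => Real.continuousAt_rpow_const x α (Or.inr hα.le)
  have hAc : Continuous fun x : ℝ => σ ^ α * (1 - x) ^ α :=
    continuous_const.mul (hBc.comp (continuous_const.sub continuous_id))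
  have hcont : ContinuousOn F (Icc 0 1) := by
    refine ContinuousOn.sub
      (hAc.continuousOn.div (hAc.add hBc).continuousOn fun x hx => (key x hx).1.ne')
      (ContinuousOn.div
        (hAc.mul ((continuous_const.mul hBc).add (continuous_const.mul hAc))).continuousOn
        (((hAc.add hBc).pow 2).sub (continuous_const.mul (hAc.mul hBc))).continuousOn
        fun x hx => (key x hx).2.ne')
  -- derivative
  have hderiv : ∀ w ∈ Ioo (0:ℝ) 1, HasDerivAt F (unitFrechetPDF σ α ρ w) w := by
    intro w hw
    obtain ⟨hw0, hw1⟩ := hw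
    have hwmem : w ∈ Icc (0:ℝ) 1 := ⟨hw0.le, hw1.le⟩
    have hne : σ ^ α * (1 - w) ^ α + w ^ α ≠ 0 := (key w hwmem).1.ne'
    have hQne : (σ ^ α * (1 - w) ^ α + w ^ α) ^ 2
        - ρ * (σ ^ α * (1 - w) ^ α * w ^ α) ≠ 0 := (key w hwmem).2.ne'
    have h1w : (0:ℝ) < 1 - w := by linarith
    have hB : HasDerivAt (fun x : ℝ => x ^ α) (α * w ^ (α - 1)) w :=
      Real.hasDerivAt_rpow_const (Or.inl hw0.ne')
    have hY : HasDerivAt (fun x : ℝ => (1 - x) ^ α) (-1 * α * (1 - w) ^ (α - 1)) w := by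
      have h := ((hasDerivAt_id w).const_sub 1).rpow_const (p := α) (Or.inl h1w.ne')
      simpa using h
    have hA : HasDerivAt (fun x : ℝ => σ ^ α * (1 - x) ^ α)
        (σ ^ α * (-1 * α * (1 - w) ^ (α - 1))) w := hY.const_mul _
    have hsum : HasDerivAt (fun x : ℝ => σ ^ α * (1 - x) ^ α + x ^ α)
        (σ ^ α * (-1 * α * (1 - w) ^ (α - 1)) + α * w ^ (α - 1)) w := hA.add hB
    have hP : HasDerivAt (fun x : ℝ => (2 - ρ) * x ^ α + 2 * (σ ^ α * (1 - x) ^ α))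
        ((2 - ρ) * (α * w ^ (α - 1)) + 2 * (σ ^ α * (-1 * α * (1 - w) ^ (α - 1)))) w :=
      (hB.const_mul _).add (hA.const_mul _)
    have hN := hA.mul hP
    have hQ := (hsum.pow 2).sub ((hA.mul hB).const_mul ρ)
    have hd := (hA.div hsum hne).sub ((hN.div hQ hQne))
    refine hd.congr_deriv (Eq.symm ?_)
    simp only [Pi.add_apply, Pi.sub_apply, Pi.mul_apply, Pi.pow_apply]
    simp only [unitFrechetPDF]
    simp only [Real.div_rpow hw0.le h1w.le]
    rw [Real.rpow_sub hw0, Real.rpow_sub h1w, Real.rpow_one, Real.rpow_one]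
    set X := w ^ α with hX
    set Y := (1 - w) ^ α with hYd
    set S := σ ^ α with hSd
    have hXp : 0 < X := Real.rpow_pos_of_pos hw0 α
    have hYp : 0 < Y := Real.rpow_pos_of_pos h1w α
    have e1 : X / Y / S + 1 = (X + S * Y) / (S * Y) := by field_simp
    have e2 : (X / Y / S + 1) ^ 2 - ρ * (X / Y / S) =
        ((X + S * Y) ^ 2 - ρ * (X * (S * Y))) / (S * Y) ^ 2 := by field_simp
    have e3 : 2 * (X / Y / S + 1) ^ 2 - ρ * ((X / Y / S) ^ 2 + 1) =
        (2 * (X + S * Y) ^ 2 - ρ * (X ^ 2 + (S * Y) ^ 2)) / (S * Y) ^ 2 := by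
      field_simp
    rw [e2, e3, e1]
    have hQn : (X + S * Y) ^ 2 - ρ * (X * (S * Y)) ≠ 0 := by
      intro h
      apply hQne
      rw [← h]; ring
    have hXSY : X + S * Y ≠ 0 := by positivity
    field_simp
    all_goals ring
  -- nonnegativity
  have hnonneg : ∀ w ∈ Ioo (0:ℝ) 1, 0 ≤ unitFrechetPDF σ α ρ w := fun w hw =>
    unitFrechetPDF_nonneg σ α ρ hσ hα hρ0 hρ1 hw.1 hw.2
  -- integrability
  have hint : IntervalIntegrable (unitFrechetPDF σ α ρ) volume 0 1 := by
    apply intervalIntegral.intervalIntegrable_deriv_of_nonneg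
    · simpa [uIcc_of_le (zero_le_one' ℝ)] using hcont
    · simpa using hderiv
    · simpa using hnonneg
  rw [intervalIntegral.integral_eq_sub_of_hasDerivAt_of_le zero_le_one hcont hderiv hint]
  have hF1 : F 1 = 0 := by
    simp [hF, Real.zero_rpow hα.ne', Real.one_rpow]
  have hF0 : F 0 = -1 := by
    simp only [hF, sub_zero, Real.one_rpow, Real.zero_rpow hα.ne', mul_one, add_zero, mul_zero]
    field_simp
    ring
  rw [hF1, hF0]
  norm_num
end

section
/- For every σ₁, σ₂ > 0, α > 0, ρ ∈ [0,1] and every s > 0, the following integral identity holds: ∫₀^∞ exp{ −(s x/σ₁)^{−α} − (x/σ₂)^{−α} + ρ[(s x/σ₁)^α + (x/σ₂)^α]^{−1} } · (α/x) · [ (x/σ₂)^{−α} − ρ (x/σ₂)^α ( (s x/σ₁)^α + (x/σ₂)^α )^{−2} ] dx = [ 1 − ρ( (σ₂ s/σ₁)^α + 1 )^{−2} ] / [ 1 + ( σ₂ s/σ₁ )^{−α} − ρ( (σ₂ s/σ₁)^α + 1 )^{−1} ]. -/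
open MeasureTheory Set Filter Real Topology

/-- The integral identity yielding the CDF of the ratio `X₁/(X₁+X₂)` for a
bivariate extreme distribution with Fréchet margins. -/
theorem bivExtreme_ratio_integral (σ₁ σ₂ α ρ : ℝ) (hσ₁ : 0 < σ₁) (hσ₂ : 0 < σ₂)
    (hα : 0 < α) (hρ : ρ ∈ Set.Icc (0 : ℝ) 1) (s : ℝ) (hs : 0 < s) :
    ∫ x in Set.Ioi (0 : ℝ),
      Real.exp (-(s * x / σ₁) ^ (-α) - (x / σ₂) ^ (-α)
          + ρ * ((s * x / σ₁) ^ α + (x / σ₂) ^ α)⁻¹)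
        * (α / x)
        * ((x / σ₂) ^ (-α)
            - ρ * (x / σ₂) ^ α / ((s * x / σ₁) ^ α + (x / σ₂) ^ α) ^ 2) =
      (1 - ρ / ((σ₂ * s / σ₁) ^ α + 1) ^ 2)
        / (1 + (σ₂ * s / σ₁) ^ (-α) - ρ / ((σ₂ * s / σ₁) ^ α + 1)) := by
  obtain ⟨hρ0, hρ1⟩ := hρ
  set k : ℝ := (σ₂ * s / σ₁) ^ α with hkdef
  have hkpos : 0 < k := Real.rpow_pos_of_pos (by positivity) α
  have hk1 : (0 : ℝ) < k + 1 := by linarith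
  set A : ℝ := 1 + k⁻¹ - ρ / (k + 1) with hAdef
  set B : ℝ := 1 - ρ / (k + 1) ^ 2 with hBdef
  have hρk : ρ / (k + 1) ≤ 1 / (k + 1) := by gcongr
  have h1k : 1 / (k + 1) < 1 := by
    rw [div_lt_one hk1]; linarith
  have hApos : 0 < A := by
    have : 0 < k⁻¹ := by positivity
    rw [hAdef]; linarith
  have hBpos : 0 < B := by
    have h2 : ρ / (k + 1) ^ 2 ≤ 1 / (k + 1) ^ 2 := by gcongr
    have h3 : 1 / (k + 1) ^ 2 < 1 := by
      rw [div_lt_one (by positivity)]; nlinarith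
    rw [hBdef]; linarith
  -- the antiderivative
  set g : ℝ → ℝ := fun x => if x ≤ 0 then 0 else B / A * Real.exp (-A * (x / σ₂) ^ (-α))
    with hgdef
  set g' : ℝ → ℝ := fun x => B * Real.exp (-A * (x / σ₂) ^ (-α)) * (α / x) * (x / σ₂) ^ (-α)
    with hg'def
  have hkneg : (σ₂ * s / σ₁) ^ (-α) = k⁻¹ := by
    rw [Real.rpow_neg (by positivity)]
  -- key facts for x > 0
  have key : ∀ x : ℝ, 0 < x →
      (s * x / σ₁) ^ α = k * (x / σ₂) ^ α ∧ (x / σ₂) ^ (-α) = ((x / σ₂) ^ α)⁻¹ ∧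
      (s * x / σ₁) ^ (-α) = (k * (x / σ₂) ^ α)⁻¹ := by
    intro x hx
    have h1 : (s * x / σ₁ : ℝ) = (σ₂ * s / σ₁) * (x / σ₂) := by field_simp
    have h2 : (s * x / σ₁) ^ α = k * (x / σ₂) ^ α := by
      rw [h1, Real.mul_rpow (by positivity) (by positivity)]
    refine ⟨h2, Real.rpow_neg (by positivity) α, ?_⟩
    rw [h1, Real.rpow_neg (by positivity), Real.mul_rpow (by positivity) (by positivity)]
  -- integrand equals g'
  have hint_eq : ∀ x ∈ Set.Ioi (0 : ℝ),
      Real.exp (-(s * x / σ₁) ^ (-α) - (x / σ₂) ^ (-α)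
          + ρ * ((s * x / σ₁) ^ α + (x / σ₂) ^ α)⁻¹)
        * (α / x)
        * ((x / σ₂) ^ (-α)
            - ρ * (x / σ₂) ^ α / ((s * x / σ₁) ^ α + (x / σ₂) ^ α) ^ 2) = g' x := by
    intro x hx
    have hx : 0 < x := hx
    obtain ⟨e1, e2, e3⟩ := key x hx
    have ht : 0 < (x / σ₂) ^ α := Real.rpow_pos_of_pos (by positivity) α
    simp only [hg'def]
    rw [e1, e3, e2]
    set t : ℝ := (x / σ₂) ^ α
    have hexp : -(k * t)⁻¹ - t⁻¹ + ρ * (k * t + t)⁻¹ = -A * t⁻¹ := by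
      rw [hAdef]; field_simp; ring
    rw [hexp]
    have hbr : t⁻¹ - ρ * t / (k * t + t) ^ 2 = B * t⁻¹ := by
      rw [hBdef]; field_simp
    rw [hbr]; ring
  rw [MeasureTheory.setIntegral_congr_fun (by measurability) hint_eq]
  -- derivative
  have hderiv : ∀ x ∈ Set.Ioi (0 : ℝ), HasDerivAt g (g' x) x := by
    intro x hx
    have hx : 0 < x := hx
    have hxσ : 0 < x / σ₂ := by positivity
    have h1 : HasDerivAt (fun y : ℝ => y / σ₂) (1 / σ₂) x := by
      simpa using (hasDerivAt_id x).div_const σ₂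
    have h2 : HasDerivAt (fun y : ℝ => (y / σ₂) ^ (-α))
        ((-α * (x / σ₂) ^ (-α - 1)) * (1 / σ₂)) x :=
      by
        have := (Real.hasDerivAt_rpow_const (x := x / σ₂) (p := -α) (Or.inl hxσ.ne')).comp x h1
        exact this
    have h3 : HasDerivAt (fun y : ℝ => B / A * Real.exp (-A * (y / σ₂) ^ (-α)))
        (B / A * (Real.exp (-A * (x / σ₂) ^ (-α)) *
          (-A * ((-α * (x / σ₂) ^ (-α - 1)) * (1 / σ₂))))) x := by
      exact ((h2.const_mul (-A)).exp).const_mul (B / A)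
    have heq : B / A * (Real.exp (-A * (x / σ₂) ^ (-α)) *
          (-A * ((-α * (x / σ₂) ^ (-α - 1)) * (1 / σ₂)))) = g' x := by
      have hsplit : (x / σ₂) ^ (-α - 1) = (x / σ₂) ^ (-α) * (x / σ₂)⁻¹ := by
        rw [show (-α - 1 : ℝ) = -α + (-1) by ring, Real.rpow_add hxσ, Real.rpow_neg_one]
      rw [hg'def, hsplit]
      field_simp
    rw [← heq]
    refine h3.congr_of_eventuallyEq ?_
    filter_upwards [Ioi_mem_nhds hx] with y hy
    simp [hgdef, not_le.mpr (show (0:ℝ) < y from hy)]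
  -- nonnegativity
  have hpos : ∀ x ∈ Set.Ioi (0 : ℝ), 0 ≤ g' x := by
    intro x hx
    have hx : 0 < x := hx
    have : 0 < (x / σ₂) ^ (-α) := Real.rpow_pos_of_pos (by positivity) _
    have := Real.exp_pos (-A * (x / σ₂) ^ (-α))
    positivity
  -- limit at infinity
  have hlim : Tendsto g atTop (𝓝 (B / A)) := by
    have hu : Tendsto (fun x : ℝ => (x / σ₂) ^ (-α)) atTop (𝓝 0) :=
      (tendsto_rpow_neg_atTop hα).comp (tendsto_id.atTop_div_const hσ₂)
    have h2 : Tendsto (fun x : ℝ => B / A * Real.exp (-A * (x / σ₂) ^ (-α))) atTop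
        (𝓝 (B / A * Real.exp (-A * 0))) :=
      (Real.continuous_exp.tendsto _).comp (hu.const_mul (-A)) |>.const_mul (B / A)
    simp only [mul_zero, Real.exp_zero, mul_one] at h2
    refine h2.congr' ?_
    filter_upwards [eventually_gt_atTop (0 : ℝ)] with y hy
    simp [hgdef, not_le.mpr hy]
  -- continuity at 0 from the right
  have hcont : ContinuousWithinAt g (Set.Ici (0 : ℝ)) 0 := by
    have h0 : g 0 = 0 := by simp [hgdef]
    rw [ContinuousWithinAt, h0, ← Set.Ioi_insert, nhdsWithin_insert, tendsto_sup]
    constructor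
    · simpa [h0] using tendsto_pure_nhds g 0
    · have hu : Tendsto (fun x : ℝ => (x / σ₂) ^ (-α)) (𝓝[>] (0 : ℝ)) atTop := by
        have h1 : Tendsto (fun x : ℝ => x / σ₂) (𝓝[>] (0 : ℝ)) (𝓝[>] 0) := by
          refine tendsto_nhdsWithin_iff.mpr ⟨?_, ?_⟩
          · have := ((continuous_id.div_const σ₂).tendsto 0)
            simpa using this.mono_left nhdsWithin_le_nhds
          · filter_upwards [self_mem_nhdsWithin] with y hy
            exact div_pos hy hσ₂
        have h2 : Tendsto (fun t : ℝ => (t⁻¹) ^ α) (𝓝[>] (0 : ℝ)) atTop :=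
          (tendsto_rpow_atTop hα).comp tendsto_inv_nhdsGT_zero
        have h3 : Tendsto (fun x : ℝ => ((x / σ₂)⁻¹) ^ α) (𝓝[>] (0 : ℝ)) atTop := h2.comp h1
        refine h3.congr' ?_
        filter_upwards [self_mem_nhdsWithin] with y hy
        have hy' : (0:ℝ) ≤ y / σ₂ := le_of_lt (div_pos hy hσ₂)
        rw [Real.inv_rpow hy', ← Real.rpow_neg hy']
      have h4 : Tendsto (fun x : ℝ => -A * (x / σ₂) ^ (-α)) (𝓝[>] (0 : ℝ)) atBot :=
        hu.const_mul_atTop_of_neg (by linarith)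
      have h5 : Tendsto (fun x : ℝ => B / A * Real.exp (-A * (x / σ₂) ^ (-α)))
          (𝓝[>] (0 : ℝ)) (𝓝 (B / A * 0)) :=
        (Real.tendsto_exp_atBot.comp h4).const_mul (B / A)
      simp only [mul_zero] at h5
      refine h5.congr' ?_
      filter_upwards [self_mem_nhdsWithin] with y hy
      simp [hgdef, not_le.mpr (show (0:ℝ) < y from hy)]
  have := MeasureTheory.integral_Ioi_of_hasDerivAt_of_nonneg hcont hderiv hpos hlim
  rw [this]
  have h0 : g 0 = 0 := by simp [hgdef]
  rw [h0, sub_zero, hkneg, hBdef, hAdef]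
end
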